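/- In a multi-urn search model, for every subset U ⊆ V and all draw counts x : V → ℕ with x_i ≤ N_i, one has R_U(x) = (∏_{i ∈ U} (1 − x_i/N_i)) · ∑_{S : U ⊆ S ⊆ V} (−1)^{|S|−|U|} φ_S ∏_{j ∈ S∖U} (x_j/N_j). Consequently, if Q(x) > 0, the conditional probability that every urn in U contains a red marble given that no red marble has been drawn satisfies R_U(x)/Q(x) = [(∏_{i ∈ U} (1 − x_i/N_i)) · ∑_{S : U ⊆ S ⊆ V} (−1)^{|S|−|U|} φ_S ∏_{j ∈ S∖U} (x_j/N_j)] / [∑_{S ⊆ V} (−1)^{|S|} φ_S ∏_{j ∈ S} (x_j/N_j)]. -/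

import Mathlib

open Finset

variable {V : Type*} [Fintype V] [DecidableEq V]

lemma inner_sum_aux (p : V → ℝ) (U T : Finset V) (hUT : U ⊆ T) :
    ∑ S ∈ univ.filter (fun S => U ⊆ S ∧ S ⊆ T),
      (-1 : ℝ) ^ (S.card - U.card) * ∏ j ∈ S \ U, p j = ∏ j ∈ T \ U, (1 - p j) := by
  have hexp : ∏ j ∈ T \ U, (1 - p j) =
      ∑ B ∈ (T \ U).powerset, (-1 : ℝ) ^ B.card * ∏ j ∈ B, p j := by
    have h := Finset.prod_add (fun j => -p j) (fun _ => (1 : ℝ)) (T \ U)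
    simp only [prod_const_one, mul_one] at h
    have : ∀ B : Finset V, ∏ j ∈ B, (-p j) = (-1 : ℝ) ^ B.card * ∏ j ∈ B, p j := by
      intro B
      rw [← prod_const, ← prod_mul_distrib]
      simp [neg_one_mul]
    calc ∏ j ∈ T \ U, (1 - p j) = ∏ j ∈ T \ U, (-p j + 1) := by
          refine Finset.prod_congr rfl fun j _ => by ring
      _ = ∑ B ∈ (T \ U).powerset, ∏ j ∈ B, (-p j) := h
      _ = ∑ B ∈ (T \ U).powerset, (-1 : ℝ) ^ B.card * ∏ j ∈ B, p j := by
          exact Finset.sum_congr rfl fun B _ => this B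
  rw [hexp]
  refine Finset.sum_nbij' (fun S => S \ U) (fun B => U ∪ B) ?_ ?_ ?_ ?_ ?_
  · intro S hS
    simp only [mem_filter, mem_univ, true_and] at hS
    exact mem_powerset.2 (sdiff_subset_sdiff hS.2 le_rfl)
  · intro B hB
    simp only [mem_powerset] at hB
    simp only [mem_filter, mem_univ, true_and]
    constructor
    · exact subset_union_left
    · exact union_subset hUT (hB.trans sdiff_subset)
  · intro S hS
    simp only [mem_filter, mem_univ, true_and] at hS
    exact union_sdiff_of_subset hS.1
  · intro B hB
    simp only [mem_powerset] at hB
    have hdisj : Disjoint U B := disjoint_of_subset_right hB sdiff_disjoint.symm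
    show (U ∪ B) \ U = B
    rw [union_sdiff_cancel_left hdisj]
  · intro S hS
    simp only [mem_filter, mem_univ, true_and] at hS
    show _ = (-1 : ℝ) ^ (S \ U).card * ∏ j ∈ S \ U, p j
    rw [card_sdiff_of_subset hS.1]

lemma main_aux (p : V → ℝ) (μ : Finset V → ℝ) (U : Finset V) :
    ∑ T ∈ univ.filter (fun T => U ⊆ T), μ T * ∏ i ∈ T, (1 - p i) =
    (∏ i ∈ U, (1 - p i)) *
      ∑ S ∈ univ.filter (fun S => U ⊆ S),
        (-1 : ℝ) ^ (S.card - U.card) *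
          (∑ T ∈ univ.filter (fun T => S ⊆ T), μ T) * ∏ j ∈ S \ U, p j := by
  rw [Finset.mul_sum]
  have step : ∀ S ∈ univ.filter (fun S => U ⊆ S),
      (∏ i ∈ U, (1 - p i)) *
        ((-1 : ℝ) ^ (S.card - U.card) * (∑ T ∈ univ.filter (fun T => S ⊆ T), μ T)
          * ∏ j ∈ S \ U, p j) =
      ∑ T : Finset V, (if U ⊆ S ∧ S ⊆ T then
        μ T * ((∏ i ∈ U, (1 - p i)) * ((-1 : ℝ) ^ (S.card - U.card) * ∏ j ∈ S \ U, p j))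
        else 0) := by
    intro S hS
    simp only [mem_filter, mem_univ, true_and] at hS
    have : (∑ T : Finset V, (if U ⊆ S ∧ S ⊆ T then
        μ T * ((∏ i ∈ U, (1 - p i)) * ((-1 : ℝ) ^ (S.card - U.card) * ∏ j ∈ S \ U, p j))
        else 0)) = ∑ T ∈ univ.filter (fun T => S ⊆ T),
          μ T * ((∏ i ∈ U, (1 - p i)) * ((-1 : ℝ) ^ (S.card - U.card) * ∏ j ∈ S \ U, p j)) := by
      rw [Finset.sum_filter]
      exact Finset.sum_congr rfl fun T _ => by simp [hS]
    rw [this, ← Finset.sum_mul]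
    ring
  rw [Finset.sum_congr rfl step]
  have h2 : ∑ S ∈ univ.filter (fun S => U ⊆ S), ∑ T : Finset V, (if U ⊆ S ∧ S ⊆ T then
        μ T * ((∏ i ∈ U, (1 - p i)) * ((-1 : ℝ) ^ (S.card - U.card) * ∏ j ∈ S \ U, p j))
        else 0) = ∑ S : Finset V, ∑ T : Finset V, (if U ⊆ S ∧ S ⊆ T then
        μ T * ((∏ i ∈ U, (1 - p i)) * ((-1 : ℝ) ^ (S.card - U.card) * ∏ j ∈ S \ U, p j))
        else 0) := by
    rw [Finset.sum_filter]
    refine Finset.sum_congr rfl fun S _ => ?_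
    split_ifs with h
    · rfl
    · symm
      refine Finset.sum_eq_zero fun T _ => ?_
      simp [h]
  rw [h2, Finset.sum_comm]
  rw [Finset.sum_filter]
  refine Finset.sum_congr rfl fun T _ => ?_
  by_cases hUT : U ⊆ T
  · have hfil : ∑ S : Finset V, (if U ⊆ S ∧ S ⊆ T then
        μ T * ((∏ i ∈ U, (1 - p i)) * ((-1 : ℝ) ^ (S.card - U.card) * ∏ j ∈ S \ U, p j))
        else 0) = μ T * ((∏ i ∈ U, (1 - p i)) *
          ∑ S ∈ univ.filter (fun S => U ⊆ S ∧ S ⊆ T),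
            (-1 : ℝ) ^ (S.card - U.card) * ∏ j ∈ S \ U, p j) := by
      rw [Finset.mul_sum, Finset.mul_sum, Finset.sum_filter]
      try exact Finset.sum_congr rfl fun S _ => by split_ifs <;> ring
    rw [hfil, inner_sum_aux p U T hUT, ← Finset.prod_sdiff hUT, if_pos hUT]
    ring
  · rw [if_neg hUT]
    symm
    refine Finset.sum_eq_zero fun S _ => ?_
    have : ¬(U ⊆ S ∧ S ⊆ T) := fun h => hUT (h.1.trans h.2)
    simp [this]

/-- `phi μ U` is the probability that every urn in `U` contains a red marble:
the sum of `μ T` over all `T ⊇ U`. -/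
noncomputable def phi (μ : Finset V → ℝ) (U : Finset V) : ℝ :=
  ∑ T ∈ univ.filter (fun T => U ⊆ T), μ T

/-- `Qfun N μ x` is the probability that no red marble appears among the first
`x i` randomly drawn marbles of each urn `i`. -/
noncomputable def Qfun (N : V → ℕ) (μ : Finset V → ℝ) (x : V → ℕ) : ℝ :=
  ∑ T : Finset V, μ T * ∏ i ∈ T, (1 - (x i : ℝ) / (N i : ℝ))

/-- `Rfun N μ U x` is the probability that no red marble has been drawn and every
urn in `U` contains a red marble. -/
noncomputable def Rfun (N : V → ℕ) (μ : Finset V → ℝ) (U : Finset V) (x : V → ℕ) : ℝ :=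
  ∑ T ∈ univ.filter (fun T => U ⊆ T), μ T * ∏ i ∈ T, (1 - (x i : ℝ) / (N i : ℝ))

/-- **Urn Probabilities** (Theorem 1 of the paper). -/
theorem urn_probabilities (N : V → ℕ) (hN : ∀ i, 1 ≤ N i)
    (μ : Finset V → ℝ) (hμ0 : ∀ T, 0 ≤ μ T) (hμ1 : ∑ T : Finset V, μ T = 1)
    (U : Finset V) (x : V → ℕ) (hx : ∀ i, x i ≤ N i) :
    Rfun N μ U x =
      (∏ i ∈ U, (1 - (x i : ℝ) / (N i : ℝ))) *
        ∑ S ∈ univ.filter (fun S => U ⊆ S),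
          (-1 : ℝ) ^ (S.card - U.card) * phi μ S * ∏ j ∈ S \ U, (x j : ℝ) / (N j : ℝ) ∧
    (0 < Qfun N μ x →
      Rfun N μ U x / Qfun N μ x =
        ((∏ i ∈ U, (1 - (x i : ℝ) / (N i : ℝ))) *
            ∑ S ∈ univ.filter (fun S => U ⊆ S),
              (-1 : ℝ) ^ (S.card - U.card) * phi μ S * ∏ j ∈ S \ U, (x j : ℝ) / (N j : ℝ)) /
          (∑ S : Finset V, (-1 : ℝ) ^ S.card * phi μ S * ∏ j ∈ S, (x j : ℝ) / (N j : ℝ))) := by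
  set p : V → ℝ := fun i => (x i : ℝ) / (N i : ℝ) with hp
  have h1 : Rfun N μ U x =
      (∏ i ∈ U, (1 - p i)) *
        ∑ S ∈ univ.filter (fun S => U ⊆ S),
          (-1 : ℝ) ^ (S.card - U.card) * phi μ S * ∏ j ∈ S \ U, p j := by
    rw [Rfun, main_aux p μ U]
    rfl
  refine ⟨h1, fun hQpos => ?_⟩
  have hQ : Qfun N μ x = ∑ S : Finset V, (-1 : ℝ) ^ S.card * phi μ S * ∏ j ∈ S, p j := by
    have h2 := main_aux p μ (∅ : Finset V)
    simp only [empty_subset, filter_true, filter_true_of_mem, card_empty, Nat.sub_zero,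
      prod_empty, one_mul, sdiff_empty] at h2
    rw [Qfun]
    convert h2 using 2 <;> simp [phi, filter_true_of_mem]
  rw [h1, hQ]
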